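/- Let A be an m×n real matrix with rank ρ and k ≤ ρ. For any n×k real matrix S and any integer p ≥ 0, σ_k((A Aᵀ)^p A S) ≥ σ_k(A)^{2p+1} · σ_k(V_kᵀ S). -/

import Mathlib

open Matrix MeasureTheory ProbabilityTheory
open scoped Matrix.Norms.L2Operator

noncomputable section

theorem Matrix.isHermitian_transpose_mul_self {m n : Type*} [Fintype m] (M : Matrix m n ℝ) :
    (Mᵀ * M).IsHermitian := by
  rw [Matrix.IsHermitian, Matrix.conjTranspose_eq_transpose_of_trivial, Matrix.transpose_mul,
    Matrix.transpose_transpose]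

/-- Euclidean (ℓ²) norm of a vector. -/
def vnorm {m : ℕ} (x : Fin m → ℝ) : ℝ := ‖(WithLp.equiv 2 (Fin m → ℝ)).symm x‖

/-- `sval M i` is the `i`-th largest singular value of `M` (0-indexed), i.e. the square root of
the `i`-th largest eigenvalue of `MᵀM`. -/
def sval {m n : ℕ} (M : Matrix (Fin m) (Fin n) ℝ) (i : Fin n) : ℝ :=
  Real.sqrt ((Matrix.isHermitian_transpose_mul_self M).eigenvalues
    (Tuple.sort (Matrix.isHermitian_transpose_mul_self M).eigenvalues i.rev))

/-- `P` is the Moore–Penrose pseudoinverse of `M` (the four Penrose conditions). -/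
def IsMoorePenrose {m n : ℕ} (M : Matrix (Fin m) (Fin n) ℝ)
    (P : Matrix (Fin n) (Fin m) ℝ) : Prop :=
  M * P * M = M ∧ P * M * P = P ∧ (M * P)ᵀ = M * P ∧ (P * M)ᵀ = P * M

/-- Column space of a matrix: the span of its columns. -/
def colSpace {m n : ℕ} (M : Matrix (Fin m) (Fin n) ℝ) : Submodule ℝ (Fin m → ℝ) :=
  Submodule.span ℝ (Set.range Mᵀ)

lemma dot_self_transpose_mul {a b : ℕ} (M : Matrix (Fin a) (Fin b) ℝ) (x : Fin b → ℝ) :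
    x ⬝ᵥ ((Mᵀ * M) *ᵥ x) = (M *ᵥ x) ⬝ᵥ (M *ᵥ x) := by
  rw [← Matrix.mulVec_mulVec, Matrix.dotProduct_mulVec, Matrix.vecMul_transpose]

lemma sorted_zero_le {N : ℕ} (hN : 0 < N) (f : Fin N → ℝ) (i : Fin N) :
    f (Tuple.sort f ⟨0, hN⟩) ≤ f i := by
  have h := Tuple.monotone_sort f
    (a := (⟨0, hN⟩ : Fin N)) (b := (Tuple.sort f)⁻¹ i) (by exact Fin.mk_le_of_le_val (Nat.zero_le _))
  simpa using h

lemma rayleigh_lower {N : ℕ} {M : Matrix (Fin N) (Fin N) ℝ} (hM : M.IsHermitian)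
    {c : ℝ} (hc : ∀ i, c ≤ hM.eigenvalues i) (x : Fin N → ℝ) :
    c * (x ⬝ᵥ x) ≤ x ⬝ᵥ (M *ᵥ x) := by
  set W : Matrix (Fin N) (Fin N) ℝ := (hM.eigenvectorUnitary : Matrix (Fin N) (Fin N) ℝ) with hWdef
  have hW : W * star W = 1 := (Matrix.mem_unitaryGroup_iff).mp hM.eigenvectorUnitary.2
  have hpsd : (M - c • 1).PosSemidef := by
    have h1 : M - c • 1 = W * Matrix.diagonal (fun i => hM.eigenvalues i - c) * Wᴴ := by
      conv_lhs => rw [hM.spectral_theorem, Unitary.conjStarAlgAut_apply]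
      rw [← Matrix.star_eq_conjTranspose]
      have h2 : (c • (1 : Matrix (Fin N) (Fin N) ℝ)) = W * (c • 1) * star W := by
        rw [Matrix.mul_smul, Matrix.mul_one, Matrix.smul_mul, hW]
      rw [h2, ← Matrix.sub_mul, ← Matrix.mul_sub]
      congr 1
      have h3 : (c • (1 : Matrix (Fin N) (Fin N) ℝ)) = Matrix.diagonal (fun _ => c) := by
        ext i j; by_cases h : i = j <;> simp [Matrix.one_apply, h]
      rw [h3, Matrix.diagonal_sub]
      congr 1
    rw [h1, ← Matrix.star_eq_conjTranspose]
    exact (Matrix.PosSemidef.diagonal (by intro i; simp [sub_nonneg, hc i])).mul_mul_conjTranspose_same W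
  have h0 := hpsd.dotProduct_mulVec_nonneg x
  rw [star_trivial, Matrix.sub_mulVec, dotProduct_sub, Matrix.smul_mulVec,
    Matrix.one_mulVec, dotProduct_smul, smul_eq_mul] at h0
  linarith

lemma eig_attained {N : ℕ} {M : Matrix (Fin N) (Fin N) ℝ} (hM : M.IsHermitian) (i : Fin N) :
    ∃ x : Fin N → ℝ, x ⬝ᵥ x = 1 ∧ x ⬝ᵥ (M *ᵥ x) = hM.eigenvalues i := by
  refine ⟨⇑(hM.eigenvectorBasis i), ?_, ?_⟩
  · have h1 : ‖hM.eigenvectorBasis i‖ = 1 := hM.eigenvectorBasis.orthonormal.1 i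
    have h2 : (inner (𝕜 := ℝ) (hM.eigenvectorBasis i) (hM.eigenvectorBasis i)) = 1 := by
      rw [real_inner_self_eq_norm_sq, h1]; norm_num
    rw [EuclideanSpace.inner_eq_star_dotProduct] at h2
    simpa using h2
  · have := hM.eigenvalues_eq i
    simpa using this.symm


set_option maxHeartbeats 2000000 in
/-- `σ_k((A Aᵀ)^p A S) ≥ σ_k(A)^{2p+1} σ_k(V_kᵀ S)`. -/
theorem stmt_5 (m n ρ k : ℕ) (hk0 : 0 < k) (hkρ : k ≤ ρ)
    (A : Matrix (Fin m) (Fin n) ℝ)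
    (U : Matrix (Fin m) (Fin ρ) ℝ) (V : Matrix (Fin n) (Fin ρ) ℝ) (σ : Fin ρ → ℝ)
    (hU : Uᵀ * U = 1) (hV : Vᵀ * V = 1)
    (hσpos : ∀ i, 0 < σ i) (hσmono : ∀ i j : Fin ρ, i ≤ j → σ j ≤ σ i)
    (hA : A = U * Matrix.diagonal σ * Vᵀ) (hrank : A.rank = ρ)
    (S : Matrix (Fin n) (Fin k) ℝ) (p : ℕ) :
    σ ⟨k - 1, by omega⟩ ^ (2 * p + 1) *
        sval ((V.submatrix id (Fin.castLE hkρ))ᵀ * S) ⟨k - 1, by omega⟩ ≤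
      sval ((A * Aᵀ) ^ p * A * S) ⟨k - 1, by omega⟩ := by
  have hVV : ∀ {ι : Type} (X : Matrix (Fin ρ) ι ℝ), Vᵀ * (V * X) = X := fun X => by
    rw [← Matrix.mul_assoc, hV, Matrix.one_mul]
  have hUU : ∀ {ι : Type} (X : Matrix (Fin ρ) ι ℝ), Uᵀ * (U * X) = X := fun X => by
    rw [← Matrix.mul_assoc, hU, Matrix.one_mul]
  have hDD : ∀ (f g : Fin ρ → ℝ) {ι : Type} (X : Matrix (Fin ρ) ι ℝ),
      Matrix.diagonal f * (Matrix.diagonal g * X) = Matrix.diagonal (fun i => f i * g i) * X := by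
    intro f g ι X; rw [← Matrix.mul_assoc, Matrix.diagonal_mul_diagonal]
  have hAT : Aᵀ = V * (Matrix.diagonal σ * Uᵀ) := by
    rw [hA]; simp [Matrix.transpose_mul, Matrix.mul_assoc]
  have hDpow : ∀ (a b : ℕ) {ι : Type} (X : Matrix (Fin ρ) ι ℝ),
      Matrix.diagonal (fun i => σ i ^ a) * (Matrix.diagonal (fun i => σ i ^ b) * X)
        = Matrix.diagonal (fun i => σ i ^ (a + b)) * X := by
    intro a b ι X
    rw [← Matrix.mul_assoc, Matrix.diagonal_mul_diagonal]
    exact congrArg (· * X) (congrArg Matrix.diagonal (funext fun i => (pow_add (σ i) a b).symm))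
  have hσ1 : Matrix.diagonal σ = Matrix.diagonal (fun i => σ i ^ 1) := by simp
  have key : ∀ j : ℕ, (A * Aᵀ) ^ j * A
      = U * (Matrix.diagonal (fun i => σ i ^ (2 * j + 1)) * Vᵀ) := by
    intro j; induction j with
    | zero =>
      rw [pow_zero, Matrix.one_mul, hA, Matrix.mul_assoc]; norm_num
    | succ j ih =>
      have hstep : (A * Aᵀ) ^ (j + 1) * A = ((A * Aᵀ) ^ j * A) * (Aᵀ * A) := by
        simp only [pow_succ, Matrix.mul_assoc]
      rw [hstep, ih, hAT, hA]
      simp only [hσ1]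
      simp only [Matrix.mul_assoc, hVV, hUU, hDpow]
      simp only [show 2 * j + 1 + (1 + 1) = 2 * (j + 1) + 1 from by omega]
  set q : ℕ := 2 * p + 1 with hqdef
  set t : Fin ρ := ⟨k - 1, by omega⟩ with htdef
  set Y : Matrix (Fin ρ) (Fin k) ℝ := Vᵀ * S with hYdef
  set MM : Matrix (Fin m) (Fin k) ℝ := (A * Aᵀ) ^ p * A * S with hMMdef
  set NN : Matrix (Fin k) (Fin k) ℝ := (V.submatrix id (Fin.castLE hkρ))ᵀ * S with hNNdef
  have hMeq : MM = U * (Matrix.diagonal (fun i => σ i ^ q) * Y) := by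
    rw [hMMdef, key p, hYdef]; simp only [Matrix.mul_assoc, hqdef]
  have hNeq : NN = Y.submatrix (Fin.castLE hkρ) id := by
    rw [hNNdef, hYdef]; ext i j; simp [Matrix.mul_apply]
  -- quadratic forms
  have hUnorm : ∀ w : Fin ρ → ℝ, (U *ᵥ w) ⬝ᵥ (U *ᵥ w) = w ⬝ᵥ w := by
    intro w
    rw [Matrix.dotProduct_mulVec, ← Matrix.vecMul_transpose U w, Matrix.vecMul_vecMul,
      hU, Matrix.vecMul_one]
  have hBx : ∀ x : Fin k → ℝ, x ⬝ᵥ ((MMᵀ * MM) *ᵥ x)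
      = ∑ i, (σ i ^ q * ((Y *ᵥ x) i)) * (σ i ^ q * ((Y *ᵥ x) i)) := by
    intro x
    rw [dot_self_transpose_mul, hMeq, ← Matrix.mulVec_mulVec, ← Matrix.mulVec_mulVec, hUnorm]
    simp [dotProduct, Matrix.mulVec_diagonal]
  have hCx : ∀ x : Fin k → ℝ, x ⬝ᵥ ((NNᵀ * NN) *ᵥ x)
      = ∑ j : Fin k, ((Y *ᵥ x) (Fin.castLE hkρ j)) * ((Y *ᵥ x) (Fin.castLE hkρ j)) := by
    intro x
    rw [dot_self_transpose_mul, hNeq]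
    have hsub : (Y.submatrix (Fin.castLE hkρ) id) *ᵥ x = fun j => (Y *ᵥ x) (Fin.castLE hkρ j) := by
      ext j; simp [Matrix.mulVec, dotProduct]
    rw [hsub]; simp [dotProduct]
  have hcmp : ∀ x : Fin k → ℝ,
      σ t ^ (2 * q) * (x ⬝ᵥ ((NNᵀ * NN) *ᵥ x)) ≤ x ⬝ᵥ ((MMᵀ * MM) *ᵥ x) := by
    intro x
    rw [hBx x, hCx x]
    set y : Fin ρ → ℝ := Y *ᵥ x with hy
    rw [Finset.mul_sum]
    have step1 : ∑ j : Fin k, σ t ^ (2 * q) * (y (Fin.castLE hkρ j) * y (Fin.castLE hkρ j))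
        ≤ ∑ j : Fin k, (σ (Fin.castLE hkρ j) ^ q * y (Fin.castLE hkρ j))
            * (σ (Fin.castLE hkρ j) ^ q * y (Fin.castLE hkρ j)) := by
      apply Finset.sum_le_sum
      intro j _
      have h1 : σ t ≤ σ (Fin.castLE hkρ j) := by
        apply hσmono
        have : (j : ℕ) < k := j.isLt
        exact Fin.mk_le_of_le_val (by simp [htdef]; omega)
      have h2 : σ t ^ (2 * q) ≤ σ (Fin.castLE hkρ j) ^ (2 * q) :=
        pow_le_pow_left₀ (le_of_lt (hσpos t)) h1 _
      have h3 : (σ (Fin.castLE hkρ j) ^ q * y (Fin.castLE hkρ j))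
          * (σ (Fin.castLE hkρ j) ^ q * y (Fin.castLE hkρ j))
          = σ (Fin.castLE hkρ j) ^ (2 * q) * (y (Fin.castLE hkρ j) * y (Fin.castLE hkρ j)) := by
        ring
      rw [h3]
      exact mul_le_mul_of_nonneg_right h2 (mul_self_nonneg _)
    have step2 : ∑ j : Fin k, (σ (Fin.castLE hkρ j) ^ q * y (Fin.castLE hkρ j))
          * (σ (Fin.castLE hkρ j) ^ q * y (Fin.castLE hkρ j))
        ≤ ∑ i : Fin ρ, (σ i ^ q * y i) * (σ i ^ q * y i) := by
      have h := Finset.sum_le_sum_of_subset_of_nonneg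
        (Finset.subset_univ (Finset.univ.map (Fin.castLEEmb hkρ)))
        (fun i _ _ => mul_self_nonneg ((σ i ^ q * y i)))
      rwa [Finset.sum_map] at h
    exact le_trans step1 step2
  -- eigenvalue part
  have hB : (MMᵀ * MM).IsHermitian := Matrix.isHermitian_transpose_mul_self MM
  have hC : (NNᵀ * NN).IsHermitian := Matrix.isHermitian_transpose_mul_self NN
  have hrev : ((⟨k - 1, by omega⟩ : Fin k)).rev = ⟨0, hk0⟩ := by
    ext; simp [Fin.rev]; omega
  set jB : Fin k := Tuple.sort hB.eigenvalues ((⟨k - 1, by omega⟩ : Fin k)).rev with hjB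
  set jC : Fin k := Tuple.sort hC.eigenvalues ((⟨k - 1, by omega⟩ : Fin k)).rev with hjC
  have hCmin : ∀ i, hC.eigenvalues jC ≤ hC.eigenvalues i := by
    intro i; rw [hjC, hrev]; exact sorted_zero_le hk0 _ i
  have hC0 : 0 ≤ hC.eigenvalues jC := by
    have hpsd : (NNᵀ * NN).PosSemidef := by
      refine Matrix.PosSemidef.of_dotProduct_mulVec_nonneg hC (fun x => ?_)
      rw [star_trivial, dot_self_transpose_mul]
      exact Finset.sum_nonneg fun i _ => mul_self_nonneg _
    exact hpsd.eigenvalues_nonneg jC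
  obtain ⟨u, hu1, hu2⟩ := eig_attained hB jB
  have hmain : σ t ^ (2 * q) * hC.eigenvalues jC ≤ hB.eigenvalues jB := by
    have r := rayleigh_lower hC hCmin u
    rw [hu1, mul_one] at r
    calc σ t ^ (2 * q) * hC.eigenvalues jC
        ≤ σ t ^ (2 * q) * (u ⬝ᵥ ((NNᵀ * NN) *ᵥ u)) :=
          mul_le_mul_of_nonneg_left r (pow_nonneg (le_of_lt (hσpos t)) _)
      _ ≤ u ⬝ᵥ ((MMᵀ * MM) *ᵥ u) := hcmp u
      _ = hB.eigenvalues jB := hu2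
  -- conclude
  have h2q : σ t ^ (2 * q) = (σ t ^ q) ^ 2 := by ring
  have hfin : σ t ^ q * Real.sqrt (hC.eigenvalues jC) ≤ Real.sqrt (hB.eigenvalues jB) :=
    calc σ t ^ q * Real.sqrt (hC.eigenvalues jC)
        = Real.sqrt ((σ t ^ q) ^ 2 * hC.eigenvalues jC) := by
          rw [Real.sqrt_mul (sq_nonneg _), Real.sqrt_sq (pow_nonneg (le_of_lt (hσpos t)) _)]
      _ ≤ Real.sqrt (hB.eigenvalues jB) := Real.sqrt_le_sqrt (by rw [← h2q]; exact hmain)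
  exact hfin

end
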